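/- For a positive integer B, grid points β_k = π(2k+1)/(4B) for k = 0,...,2B-1, and weights w_k = (1/4B³) sin(β_k) ∑_{j=0}^{B-1} (1/(2j+1)) sin((2j+1)β_k), the weights satisfy ∑_{k=0}^{2B-1} w_k = 1/(4B²). -/

import Mathlib

open Real Finset

lemma tele_sum (θ : ℝ) (n : ℕ) :
    ∑ k ∈ Finset.range n, (2 * Real.sin θ * Real.cos ((2 * k + 1) * θ)) =
      Real.sin (2 * n * θ) := by
  induction n with
  | zero => simp
  | succ n ih =>
    rw [Finset.sum_range_succ, ih]
    push_cast
    have e1 : (2 * ((n : ℝ) + 1) * θ) = (2 * n + 1) * θ + θ := by ring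
    have e2 : (2 * (n : ℝ) * θ) = (2 * n + 1) * θ - θ := by ring
    rw [e1, Real.sin_add, e2, Real.sin_sub]
    ring

lemma cos_sum_zero (B j : ℕ) (hB : 0 < B) (h1 : 1 ≤ j) (h2 : j ≤ 2 * B - 1) :
    ∑ k ∈ Finset.range (2 * B), Real.cos ((2 * k + 1) * ((j : ℝ) * π / (2 * B))) = 0 := by
  set θ : ℝ := (j : ℝ) * π / (2 * B) with hθ
  have hBpos : (0 : ℝ) < (B : ℝ) := by exact_mod_cast hB
  have hθpos : 0 < θ := by
    apply div_pos (mul_pos (by exact_mod_cast h1) Real.pi_pos)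
    linarith
  have hθlt : θ < π := by
    rw [hθ, div_lt_iff₀ (by linarith)]
    have : (j : ℝ) < 2 * B := by
      have : j ≤ 2 * B - 1 := h2
      have : (j : ℝ) ≤ (2 * B - 1 : ℕ) := by exact_mod_cast this
      have h2B : (1 : ℕ) ≤ 2 * B := by omega
      push_cast [h2B] at this
      linarith
    nlinarith [Real.pi_pos]
  have hsin : Real.sin θ ≠ 0 := ne_of_gt (Real.sin_pos_of_pos_of_lt_pi hθpos hθlt)
  have h := tele_sum θ (2 * B)
  have hval : Real.sin (2 * (2 * B : ℕ) * θ) = 0 := by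
    have : (2 * ((2 * B : ℕ) : ℝ) * θ) = (2 * j : ℕ) * π := by
      rw [hθ]; push_cast; field_simp
    rw [this, Real.sin_nat_mul_pi]
  rw [hval, ← Finset.mul_sum] at h
  rcases mul_eq_zero.mp h with h' | h'
  · exact absurd h' (by positivity)
  · exact h'

lemma quad_inner_sum (B : ℕ) (hB : 0 < B) (j : ℕ) (hj : j < B) :
    ∑ k ∈ Finset.range (2 * B),
        Real.sin (π * (2 * k + 1) / (4 * B)) *
          Real.sin ((2 * j + 1) * (π * (2 * k + 1) / (4 * B))) =
      if j = 0 then (B : ℝ) else 0 := by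
  have hBpos : (0 : ℝ) < (B : ℝ) := by exact_mod_cast hB
  have key : ∀ k : ℕ,
      Real.sin (π * (2 * k + 1) / (4 * B)) *
          Real.sin ((2 * j + 1) * (π * (2 * k + 1) / (4 * B))) =
      (Real.cos ((2 * k + 1) * ((j : ℝ) * π / (2 * B)))
        - Real.cos ((2 * k + 1) * (((j : ℝ) + 1) * π / (2 * B)))) / 2 := by
    intro k
    have e1 : ((2 * k + 1 : ℝ)) * ((j : ℝ) * π / (2 * B)) =
        (2 * j + 1) * (π * (2 * k + 1) / (4 * B)) - π * (2 * k + 1) / (4 * B) := by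
      field_simp; ring
    have e2 : ((2 * k + 1 : ℝ)) * (((j : ℝ) + 1) * π / (2 * B)) =
        (2 * j + 1) * (π * (2 * k + 1) / (4 * B)) + π * (2 * k + 1) / (4 * B) := by
      field_simp; ring
    rw [e1, e2, Real.cos_sub, Real.cos_add]
    ring
  rw [Finset.sum_congr rfl (fun k _ => key k)]
  rw [← Finset.sum_div, Finset.sum_sub_distrib]
  have hsecond : ∑ k ∈ Finset.range (2 * B),
      Real.cos ((2 * k + 1) * (((j : ℝ) + 1) * π / (2 * B))) = 0 := by
    have h := cos_sum_zero B (j + 1) hB (by omega) (by omega)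
    have : ((j + 1 : ℕ) : ℝ) = (j : ℝ) + 1 := by push_cast; ring
    rwa [this] at h
  rw [hsecond]
  by_cases hj0 : j = 0
  · subst hj0
    simp only [if_pos rfl]
    have : ∀ k ∈ Finset.range (2 * B),
        Real.cos ((2 * k + 1) * ((0 : ℕ) * π / (2 * B))) = 1 := by
      intro k _; norm_num
    rw [Finset.sum_congr rfl this]
    simp
  · rw [if_neg hj0, cos_sum_zero B j hB (by omega) (by omega)]
    ring

theorem sum_quadrature_weights (B : ℕ) (hB : 0 < B) :
    ∑ k ∈ Finset.range (2 * B),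
        (1 / (4 * (B : ℝ) ^ 3)) * Real.sin (π * (2 * k + 1) / (4 * B)) *
          ∑ j ∈ Finset.range B,
            (1 / (2 * (j : ℝ) + 1)) * Real.sin ((2 * j + 1) * (π * (2 * k + 1) / (4 * B))) =
      1 / (4 * (B : ℝ) ^ 2) := by
  have hBpos : (0 : ℝ) < (B : ℝ) := by exact_mod_cast hB
  have step : ∀ k ∈ Finset.range (2 * B),
      (1 / (4 * (B : ℝ) ^ 3)) * Real.sin (π * (2 * k + 1) / (4 * B)) *
          ∑ j ∈ Finset.range B,
            (1 / (2 * (j : ℝ) + 1)) * Real.sin ((2 * j + 1) * (π * (2 * k + 1) / (4 * B))) =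
      ∑ j ∈ Finset.range B,
        (1 / (4 * (B : ℝ) ^ 3)) * (1 / (2 * (j : ℝ) + 1)) *
          (Real.sin (π * (2 * k + 1) / (4 * B)) *
            Real.sin ((2 * j + 1) * (π * (2 * k + 1) / (4 * B)))) := by
    intro k _
    rw [Finset.mul_sum]
    apply Finset.sum_congr rfl
    intro j _; ring
  rw [Finset.sum_congr rfl step, Finset.sum_comm]
  have hinner : ∀ j ∈ Finset.range B,
      ∑ k ∈ Finset.range (2 * B),
        (1 / (4 * (B : ℝ) ^ 3)) * (1 / (2 * (j : ℝ) + 1)) *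
          (Real.sin (π * (2 * k + 1) / (4 * B)) *
            Real.sin ((2 * j + 1) * (π * (2 * k + 1) / (4 * B)))) =
      (1 / (4 * (B : ℝ) ^ 3)) * (1 / (2 * (j : ℝ) + 1)) *
        (if j = 0 then (B : ℝ) else 0) := by
    intro j hj
    rw [← Finset.mul_sum, quad_inner_sum B hB j (Finset.mem_range.mp hj)]
  rw [Finset.sum_congr rfl hinner]
  simp only [mul_ite, mul_zero]
  rw [Finset.sum_ite_eq' (Finset.range B) 0]
  rw [if_pos (Finset.mem_range.mpr hB)]
  push_cast
  field_simp
  ring
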